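/- arXiv:1008.4215 — 3 statements merged into one kernel-verified Lean document; each statement's English description precedes it below -/
import Mathlib

section
/- Let f be holomorphic on the unit disc with power series f(z) = Σ_{n≥0} a_n z^n. If |f(z)| < 1 for all z in the unit disc, then Σ_{n≥0} |a_n| (1/3)^n ≤ 1. -/
open Metric Complex


-- piece 1: summability
lemma bohr_summable_abs (a : ℕ → ℂ) (f : ℂ → ℂ)
    (hsum : ∀ z ∈ Metric.ball (0 : ℂ) 1, HasSum (fun n : ℕ => a n * z ^ n) (f z))
    {r : ℝ} (hr0 : 0 ≤ r) (hr : r < 1) :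
    Summable (fun k : ℕ => ‖a k‖ * r ^ k) := by
  set r' : ℝ := (1 + r) / 2 with hr'
  have hrr' : r < r' := by rw [hr']; linarith
  have hr'1 : r' < 1 := by rw [hr']; linarith
  have hr'0 : 0 < r' := by rw [hr']; linarith
  have hmem : (r' : ℂ) ∈ Metric.ball (0 : ℂ) 1 := by
    simp [Complex.norm_real, Real.norm_eq_abs, abs_of_pos hr'0, hr'1]
  have hs : Summable (fun k : ℕ => a k * (r' : ℂ) ^ k) := (hsum _ hmem).summable
  have hbdd : BddAbove (Set.range fun k : ℕ => ‖a k * (r' : ℂ) ^ k‖) :=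
    (hs.tendsto_atTop_zero.norm.bddAbove_range)
  obtain ⟨M, hM⟩ := hbdd
  have hM' : ∀ k : ℕ, ‖a k‖ * r' ^ k ≤ M := by
    intro k
    have := hM (Set.mem_range_self k)
    simpa [norm_mul, Complex.norm_real, Real.norm_eq_abs, abs_of_pos hr'0] using this
  have hgeo : Summable (fun k : ℕ => M * (r / r') ^ k) := by
    apply Summable.mul_left
    exact summable_geometric_of_lt_one (div_nonneg hr0 hr'0.le)
      ((div_lt_one hr'0).2 hrr')
  refine Summable.of_nonneg_of_le (fun k => by positivity) (fun k => ?_) hgeo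
  have h2 : (r / r') ^ k * r' ^ k = r ^ k := by
    rw [div_pow, div_mul_cancel₀ _ (pow_ne_zero _ hr'0.ne')]
  have : ‖a k‖ * r ^ k = (‖a k‖ * r' ^ k) * (r / r') ^ k := by
    rw [← h2]; ring
  rw [this]
  exact mul_le_mul_of_nonneg_right (hM' k) (by positivity)

lemma bohr_coeff_bound (a : ℕ → ℂ) (f : ℂ → ℂ)
    (hsum : ∀ z ∈ Metric.ball (0 : ℂ) 1, HasSum (fun n : ℕ => a n * z ^ n) (f z))
    (hb : ∀ z ∈ Metric.ball (0 : ℂ) 1, ‖f z‖ < 1)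
    {n : ℕ} (hn : 0 < n) :
    ‖a n‖ ≤ 1 - ‖a 0‖ ^ 2 := by
  have h00 : (0:ℂ) ∈ Metric.ball (0:ℂ) 1 := by simp
  have hf0 : f 0 = a 0 := by
    have h1 := hsum 0 h00
    have h2 : HasSum (fun k : ℕ => a k * (0:ℂ) ^ k) (a 0 * (0:ℂ) ^ 0) :=
      hasSum_single 0 (fun m hm => by simp [zero_pow hm])
    simpa using h1.unique h2
  have ha0 : ‖a 0‖ < 1 := hf0 ▸ hb 0 h00
  -- primitive root
  set ζ : ℂ := Complex.exp (2 * Real.pi * Complex.I / n) with hζdef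
  have hζ : IsPrimitiveRoot ζ n := Complex.isPrimitiveRoot_exp n hn.ne'
  have hζ1 : ζ ^ n = 1 := hζ.pow_eq_one
  have habsζ : ‖ζ‖ = 1 := by
    have h := congrArg (‖·‖) hζ1
    rw [norm_pow, norm_one] at h
    by_contra hne
    rcases lt_or_gt_of_ne hne with h1 | h1
    · have := pow_lt_one₀ (norm_nonneg ζ) h1 hn.ne'
      rw [h] at this; exact lt_irrefl 1 this
    · have := one_lt_pow₀ h1 hn.ne'
      rw [h] at this; exact lt_irrefl 1 this
  -- averaged function
  set g : ℂ → ℂ := fun z => (∑ j ∈ Finset.range n, f (ζ ^ j * z)) / n with hgdef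
  have hmem : ∀ z ∈ Metric.ball (0:ℂ) 1, ∀ j : ℕ, ζ ^ j * z ∈ Metric.ball (0:ℂ) 1 := by
    intro z hz j
    rw [mem_ball_zero_iff] at hz ⊢
    rwa [norm_mul, norm_pow, habsζ, one_pow, one_mul]
  have hg_lt : ∀ z ∈ Metric.ball (0:ℂ) 1, ‖g z‖ < 1 := by
    intro z hz
    have h1 : ‖∑ j ∈ Finset.range n, f (ζ ^ j * z)‖ < n := by
      calc ‖∑ j ∈ Finset.range n, f (ζ ^ j * z)‖
          ≤ ∑ j ∈ Finset.range n, ‖f (ζ ^ j * z)‖ := norm_sum_le _ _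
        _ < ∑ _j ∈ Finset.range n, 1 :=
            Finset.sum_lt_sum_of_nonempty (Finset.nonempty_range_iff.2 hn.ne')
              (fun j _ => hb _ (hmem z hz j))
        _ = n := by simp
    rw [hgdef]
    simp only []
    rw [norm_div, Complex.norm_natCast, div_lt_one (by exact_mod_cast hn)]
    exact h1
  have hNne : (n:ℂ) ≠ 0 := Nat.cast_ne_zero.2 hn.ne'
  set c : ℕ → ℂ := fun k => if n ∣ k then a k else 0 with hcdef
  have hg_sum : ∀ z ∈ Metric.ball (0:ℂ) 1, HasSum (fun k => c k * z ^ k) (g z) := by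
    intro z hz
    have h1 : HasSum (fun k : ℕ => ∑ j ∈ Finset.range n, a k * (ζ ^ j * z) ^ k)
        (∑ j ∈ Finset.range n, f (ζ ^ j * z)) :=
      hasSum_sum fun j _ => hsum _ (hmem z hz j)
    have h2 : HasSum (fun k : ℕ => (∑ j ∈ Finset.range n, a k * (ζ ^ j * z) ^ k) / n) (g z) :=
      h1.div_const (n : ℂ)
    have hfun : (fun k : ℕ => (∑ j ∈ Finset.range n, a k * (ζ ^ j * z) ^ k) / n)
        = fun k => c k * z ^ k := by
      funext k
      have h3 : ∀ j ∈ Finset.range n, a k * (ζ ^ j * z) ^ k = a k * z ^ k * (ζ ^ k) ^ j := by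
        intro j _
        rw [mul_pow, pow_right_comm]
        ring
      rw [Finset.sum_congr rfl h3, ← Finset.mul_sum]
      by_cases hdvd : n ∣ k
      · have hone : ζ ^ k = 1 := (hζ.pow_eq_one_iff_dvd k).2 hdvd
        rw [hone]
        simp only [one_pow, Finset.sum_const, Finset.card_range, nsmul_eq_mul, mul_one]
        rw [mul_div_assoc, div_self hNne, mul_one, hcdef]
        simp [hdvd]
      · have hza : ζ ^ k ≠ 1 := fun hcc => hdvd ((hζ.pow_eq_one_iff_dvd k).1 hcc)
        rw [geom_sum_eq hza]
        have hzn : (ζ ^ k) ^ n = 1 := by rw [← pow_right_comm, hζ1, one_pow]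
        rw [hzn, sub_self, zero_div, mul_zero, zero_div, hcdef]
        simp [hdvd]
    rw [hfun] at h2
    exact h2
  -- the function h with h(z^n) = g(z)
  set b : ℕ → ℂ := fun m => a (n * m) with hbdef
  set p : FormalMultilinearSeries ℂ ℂ ℂ := FormalMultilinearSeries.ofScalars ℂ b with hpdef
  have hradius : 1 ≤ p.radius := by
    by_contra hlt
    push_neg at hlt
    obtain ⟨r, hr1, hr2⟩ := ENNReal.lt_iff_exists_nnreal_btwn.1 hlt
    have hrlt1 : (r:ℝ) < 1 := by exact_mod_cast hr2
    have hs : Summable (fun m : ℕ => ‖p m‖ * (r:ℝ) ^ m) := by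
      set s : ℝ := (r:ℝ) ^ ((n:ℝ)⁻¹) with hsdef
      have hs0 : 0 ≤ s := Real.rpow_nonneg r.coe_nonneg _
      have hs1 : s < 1 := Real.rpow_lt_one r.coe_nonneg hrlt1 (by positivity)
      have hsn : s ^ n = (r:ℝ) := by
        rw [hsdef, ← Real.rpow_natCast ((r:ℝ) ^ ((n:ℝ)⁻¹)) n, ← Real.rpow_mul r.coe_nonneg,
          inv_mul_cancel₀ (by exact_mod_cast hn.ne'), Real.rpow_one]
      have hsum2 : Summable (fun k : ℕ => ‖a k‖ * s ^ k) :=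
        bohr_summable_abs a f hsum hs0 hs1
      have hsub : Summable ((fun k : ℕ => ‖a k‖ * s ^ k) ∘ (fun m : ℕ => n * m)) :=
        hsum2.comp_injective (mul_right_injective₀ hn.ne')
      refine hsub.congr fun m => ?_
      simp only [Function.comp_apply]
      rw [hpdef, FormalMultilinearSeries.ofScalars_norm, hbdef]
      rw [pow_mul, hsn]
    have := p.le_radius_of_summable_norm hs
    exact absurd this (not_le.2 hr1)
  have hball : HasFPowerSeriesOnBall p.sum p 0 1 :=
    (p.hasFPowerSeriesOnBall (lt_of_lt_of_le zero_lt_one hradius)).mono zero_lt_one hradius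
  set h : ℂ → ℂ := p.sum with hhdef
  have hsum_h : ∀ w ∈ Metric.ball (0:ℂ) 1, HasSum (fun m : ℕ => b m * w ^ m) (h w) := by
    intro w hw
    have hw' : w ∈ Metric.eball (0:ℂ) 1 := by
      rw [Metric.mem_eball, edist_zero_right, enorm_eq_nnnorm, ← ENNReal.coe_one, ENNReal.coe_lt_coe,
        ← NNReal.coe_lt_coe, coe_nnnorm, NNReal.coe_one]
      exact mem_ball_zero_iff.1 hw
    have hhs := hball.hasSum hw'
    simp only [zero_add] at hhs
    have heq : (fun m : ℕ => p m fun _ => w) = fun m => b m * w ^ m := by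
      funext m
      rw [hpdef, FormalMultilinearSeries.ofScalars_apply_eq, smul_eq_mul]
    rw [heq] at hhs
    exact hhs
  have hkey : ∀ w ∈ Metric.ball (0:ℂ) 1, ‖h w‖ < 1 := by
    intro w hw
    obtain ⟨z, hz⟩ := IsAlgClosed.exists_pow_nat_eq w hn
    have hzball : z ∈ Metric.ball (0:ℂ) 1 := by
      rw [mem_ball_zero_iff] at hw ⊢
      by_contra hzc
      push_neg at hzc
      have h1 : (1:ℝ) ≤ ‖z‖ ^ n := one_le_pow₀ hzc
      rw [← norm_pow, hz] at h1
      linarith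
    have h1 : HasSum (fun m : ℕ => b m * w ^ m) (g z) := by
      have h2 := hg_sum z hzball
      have h3 : HasSum ((fun k : ℕ => c k * z ^ k) ∘ (fun m : ℕ => n * m)) (g z) := by
        refine ((Function.Injective.hasSum_iff (mul_right_injective₀ hn.ne') ?_).2 h2)
        intro k hk
        have hnd : ¬ n ∣ k := by
          rintro ⟨m, rfl⟩
          exact hk ⟨m, rfl⟩
        simp [hcdef, hnd]
      have heq2 : ((fun k : ℕ => c k * z ^ k) ∘ (fun m : ℕ => n * m))
          = fun m : ℕ => b m * w ^ m := by
        funext m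
        simp only [Function.comp_apply, hcdef]
        rw [if_pos (Dvd.intro m rfl), pow_mul, hz]
      rw [heq2] at h3
      exact h3
    have h4 := (hsum_h w hw).unique h1
    rw [h4]
    exact hg_lt z hzball
  have hh0 : h 0 = a 0 := by
    have h1 := hsum_h 0 (by simp)
    have h2 : HasSum (fun m : ℕ => b m * (0:ℂ) ^ m) (b 0 * (0:ℂ) ^ 0) :=
      hasSum_single 0 (fun m hm => by simp [zero_pow hm])
    have h3 := h1.unique h2
    simpa [hbdef] using h3
  have hderiv : HasDerivAt h (a n) 0 := by
    have h1 := hball.hasFPowerSeriesAt.hasDerivAt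
    have hp1 : (p 1 fun _ => (1:ℂ)) = a n := by
      rw [hpdef, FormalMultilinearSeries.ofScalars_apply_eq, smul_eq_mul, one_pow, mul_one, hbdef]
      norm_num
    rwa [hp1] at h1
  -- Möbius transform and Schwarz
  set a0 : ℂ := a 0 with ha0def
  set q : ℝ := Complex.normSq a0 with hqdef
  have hq1 : q < 1 := by
    rw [hqdef, ← Complex.sq_norm]
    nlinarith [norm_nonneg a0]
  have hq0 : 0 ≤ q := Complex.normSq_nonneg a0
  have hident : ∀ u : ℂ, Complex.normSq (1 - (starRingEnd ℂ) a0 * u) - Complex.normSq (u - a0)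
      = (1 - Complex.normSq a0) * (1 - Complex.normSq u) := by
    intro u
    simp only [Complex.normSq_apply, Complex.sub_re, Complex.sub_im, Complex.mul_re,
      Complex.mul_im, Complex.one_re, Complex.one_im, Complex.conj_re, Complex.conj_im]
    ring
  have hdenom_ne : ∀ u : ℂ, ‖u‖ < 1 → 1 - (starRingEnd ℂ) a0 * u ≠ 0 := by
    intro u hu heq
    have h1 : ‖(starRingEnd ℂ) a0 * u‖ < 1 := by
      rw [norm_mul, Complex.norm_conj]
      nlinarith [norm_nonneg u, norm_nonneg a0]
    have h2 : (1:ℂ) = (starRingEnd ℂ) a0 * u := by linear_combination heq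
    rw [← h2] at h1
    simp at h1
  have hmob : ∀ u : ℂ, ‖u‖ < 1 →
      ‖(u - a0) / (1 - (starRingEnd ℂ) a0 * u)‖ < 1 := by
    intro u hu
    have hd := hdenom_ne u hu
    have h1 : Complex.normSq (u - a0) < Complex.normSq (1 - (starRingEnd ℂ) a0 * u) := by
      have h2 := hident u
      have hu2 : Complex.normSq u < 1 := by
        rw [← Complex.sq_norm]
        nlinarith [norm_nonneg u]
      nlinarith
    have h3 := Real.sqrt_lt_sqrt (Complex.normSq_nonneg _) h1
    rw [← Complex.norm_def, ← Complex.norm_def] at h3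
    rw [norm_div, div_lt_one (norm_pos_iff.mpr hd)]
    exact h3
  set F : ℂ → ℂ := fun w => (h w - a0) / (1 - (starRingEnd ℂ) a0 * h w) with hFdef
  have hF0 : F 0 = 0 := by
    rw [hFdef]
    simp only [hh0, sub_self, zero_div]
  have hhd : DifferentiableOn ℂ h (Metric.ball (0:ℂ) 1) := by
    have h1 := hball.differentiableOn
    refine h1.mono fun w hw => ?_
    rw [Metric.mem_eball, edist_zero_right, enorm_eq_nnnorm, ← ENNReal.coe_one, ENNReal.coe_lt_coe,
      ← NNReal.coe_lt_coe, coe_nnnorm, NNReal.coe_one]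
    exact mem_ball_zero_iff.1 hw
  have hFd : DifferentiableOn ℂ F (Metric.ball (0:ℂ) 1) :=
    DifferentiableOn.div (hhd.sub (differentiableOn_const _))
      ((differentiableOn_const _).sub ((differentiableOn_const _).mul hhd))
      (fun w hw => hdenom_ne _ (hkey w hw))
  have hFm : Set.MapsTo F (Metric.ball (0:ℂ) 1) (Metric.ball (F 0) 1) := by
    rw [hF0]
    intro w hw
    rw [mem_ball_zero_iff]
    exact hmob _ (hkey w hw)
  have hSchwarz := Complex.norm_deriv_le_div_of_mapsTo_ball hFd (hFm.mono_right Metric.ball_subset_closedBall) one_pos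
  rw [div_one] at hSchwarz
  have hden0 : 1 - (starRingEnd ℂ) a0 * h 0 = 1 - (q:ℂ) := by
    rw [hh0, hqdef, mul_comm, Complex.mul_conj]
  have hδ : (1 - (starRingEnd ℂ) a0 * h 0) ≠ 0 := hdenom_ne _ (hkey 0 (by simp))
  have hqc : (1:ℂ) - (q:ℂ) ≠ 0 := hden0 ▸ hδ
  have hDF : deriv F 0 = a n / (1 - (q:ℂ)) := by
    have hnum : HasDerivAt (fun w => h w - a0) (a n) 0 := hderiv.sub_const a0
    have hden : HasDerivAt (fun w => 1 - (starRingEnd ℂ) a0 * h w)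
        (-((starRingEnd ℂ) a0 * a n)) 0 :=
      (hderiv.const_mul ((starRingEnd ℂ) a0)).const_sub 1
    have hdiv : deriv (fun w => (h w - a0) / (1 - (starRingEnd ℂ) a0 * h w)) 0 = _ :=
      (hnum.div hden hδ).deriv
    rw [hFdef]
    rw [hdiv, hden0, hh0, sub_self, zero_mul, sub_zero, pow_two,
      mul_div_mul_right _ _ hqc]
  have habs : ‖deriv F 0‖ = ‖a n‖ / (1 - q) := by
    rw [hDF, norm_div]
    congr 1
    rw [← Complex.ofReal_one, ← Complex.ofReal_sub, Complex.norm_real, Real.norm_eq_abs,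
      abs_of_pos (by linarith)]
  rw [habs, div_le_one (by linarith : (0:ℝ) < 1 - q)] at hSchwarz
  rw [Complex.sq_norm]
  have h5 : Complex.normSq a0 = q := rfl
  rw [h5]
  exact hSchwarz

set_option maxHeartbeats 1000000 in
/-- Bohr's classical theorem: if `f(z) = Σ aₙ zⁿ` is holomorphic on the unit disc
with `|f| < 1` there, then `Σ |aₙ| (1/3)ⁿ ≤ 1`. -/
theorem bohr_classical (a : ℕ → ℂ) (f : ℂ → ℂ)
    (hf : DifferentiableOn ℂ f (Metric.ball (0 : ℂ) 1))
    (hsum : ∀ z ∈ Metric.ball (0 : ℂ) 1, HasSum (fun n : ℕ => a n * z ^ n) (f z))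
    (hb : ∀ z ∈ Metric.ball (0 : ℂ) 1, ‖f z‖ < 1) :
    ∑' n : ℕ, ‖a n‖ * (1 / 3 : ℝ) ^ n ≤ 1 := by
  have hS : Summable (fun k : ℕ => ‖a k‖ * (1/3 : ℝ) ^ k) :=
    bohr_summable_abs a f hsum (by norm_num) (by norm_num)
  have h00 : (0:ℂ) ∈ Metric.ball (0:ℂ) 1 := by simp
  have hf0 : f 0 = a 0 := by
    have h1 := hsum 0 h00
    have h2 : HasSum (fun k : ℕ => a k * (0:ℂ) ^ k) (a 0 * (0:ℂ) ^ 0) :=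
      hasSum_single 0 (fun m hm => by simp [zero_pow hm])
    simpa using h1.unique h2
  set A : ℝ := ‖a 0‖ with hAdef
  have hA1 : A < 1 := by rw [hAdef, ← hf0]; exact hb 0 h00
  have hA0 : 0 ≤ A := norm_nonneg _
  have hkey : ∀ m : ℕ, ‖a (m+1)‖ ≤ 1 - A ^ 2 := fun m =>
    bohr_coeff_bound a f hsum hb (Nat.succ_pos m)
  rw [hS.tsum_eq_zero_add]
  simp only [pow_zero, mul_one]
  have hgeo : Summable (fun m : ℕ => ((1 - A^2) * (1/3 : ℝ)) * (1/3 : ℝ) ^ m) :=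
    (summable_geometric_of_lt_one (by norm_num) (by norm_num)).mul_left _
  have h2 : ∑' (m : ℕ), ‖a (m+1)‖ * (1/3 : ℝ) ^ (m+1)
      ≤ ∑' (m : ℕ), ((1 - A^2) * (1/3 : ℝ)) * (1/3 : ℝ) ^ m := by
    refine ((summable_nat_add_iff 1).2 hS).tsum_le_tsum (fun m => ?_) hgeo
    have : ((1 - A^2) * (1/3 : ℝ)) * (1/3 : ℝ) ^ m = (1 - A^2) * (1/3 : ℝ) ^ (m+1) := by ring
    rw [this]
    exact mul_le_mul_of_nonneg_right (hkey m) (by positivity)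
  have h3 : ∑' (m : ℕ), ((1 - A^2) * (1/3 : ℝ)) * (1/3 : ℝ) ^ m = (1 - A^2) / 2 := by
    rw [tsum_mul_left, tsum_geometric_of_lt_one (by norm_num) (by norm_num)]
    norm_num
    ring
  rw [h3] at h2
  nlinarith [sq_nonneg (1 - A)]
end

section
/- Let 1 < R and let f be holomorphic on the annulus A = {w ∈ ℂ : 1 < |w| < R} with Laurent expansion f(w) = a_0 + Σ_{n≥1} a_n (w^n + w^{-n}). If Re(f(w)) > 0 for all w ∈ A, then for every n ≥ 1, |a_n| ≤ 2 Re(a_0) / (R^n − R^{-n}). -/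
open MeasureTheory Complex Real Set

lemma exp_int_integral (k : ℤ) :
    ∫ θ in Set.Ioc (0:ℝ) (2*π), Complex.exp (k * θ * Complex.I) =
      if k = 0 then (2*π : ℂ) else 0 := by
  rw [← intervalIntegral.integral_of_le (by positivity : (0:ℝ) ≤ 2*π)]
  split_ifs with h
  · subst h
    simp
  · have hc : (k : ℂ) * Complex.I ≠ 0 := by
      simp [Complex.I_ne_zero, h]
    simp_rw [show ∀ θ:ℝ, (k:ℂ) * θ * Complex.I = (k * Complex.I) * θ from fun θ => by ring]
    rw [integral_exp_mul_complex hc]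
    have : Complex.exp ((k * Complex.I) * (2*π:ℝ)) = 1 := by
      rw [show ((k:ℂ) * Complex.I) * (2*π:ℝ) = k * (2*π*Complex.I) by push_cast; ring]
      exact Complex.exp_int_mul_two_pi_mul_I k
    rw [this]
    simp

-- pointwise rewrite of the term
lemma term_eq (r : ℝ) (hr : 0 < r) (c : ℂ) (m : ℕ) (k : ℤ) (θ : ℝ) :
    c * (((r:ℂ) * Complex.exp (θ * Complex.I)) ^ (m+1) +
         (((r:ℂ) * Complex.exp (θ * Complex.I))⁻¹) ^ (m+1)) * Complex.exp (k * θ * Complex.I)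
    = c * (r:ℂ)^(m+1) * Complex.exp ((((m:ℤ)+1+k) : ℤ) * θ * Complex.I)
      + c * ((r:ℂ)^(m+1))⁻¹ * Complex.exp (((-((m:ℤ)+1)+k) : ℤ) * θ * Complex.I) := by
  have h1 : ((r:ℂ) * Complex.exp (θ * Complex.I)) ^ (m+1)
      = (r:ℂ)^(m+1) * Complex.exp (((m:ℂ)+1) * (θ * Complex.I)) := by
    rw [mul_pow, ← Complex.exp_nat_mul]
    push_cast
    ring_nf
  have h2 : (((r:ℂ) * Complex.exp (θ * Complex.I))⁻¹) ^ (m+1)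
      = ((r:ℂ)^(m+1))⁻¹ * Complex.exp (-(((m:ℂ)+1)) * (θ * Complex.I)) := by
    rw [mul_inv, mul_pow, ← Complex.exp_neg, ← Complex.exp_nat_mul, inv_pow]
    push_cast
    ring_nf
  have e1 : Complex.exp ((((m:ℤ)+1+k) : ℤ) * θ * Complex.I)
      = Complex.exp (((m:ℂ)+1) * (θ * Complex.I)) * Complex.exp (k * θ * Complex.I) := by
    rw [← Complex.exp_add]
    congr 1
    push_cast
    ring
  have e2 : Complex.exp (((-((m:ℤ)+1)+k) : ℤ) * θ * Complex.I)
      = Complex.exp (-(((m:ℂ)+1)) * (θ * Complex.I)) * Complex.exp (k * θ * Complex.I) := by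
    rw [← Complex.exp_add]
    congr 1
    push_cast
    ring
  rw [h1, h2, e1, e2]
  ring

lemma term_integral (r : ℝ) (hr : 0 < r) (c : ℂ) (m : ℕ) (k : ℤ) :
    ∫ θ in Set.Ioc (0:ℝ) (2*π),
      c * (((r:ℂ) * Complex.exp (θ * Complex.I)) ^ (m+1) +
           (((r:ℂ) * Complex.exp (θ * Complex.I))⁻¹) ^ (m+1)) * Complex.exp (k * θ * Complex.I)
    = c * (r:ℂ)^(m+1) * (if ((m:ℤ)+1+k) = 0 then (2*π:ℂ) else 0)
      + c * ((r:ℂ)^(m+1))⁻¹ * (if (-((m:ℤ)+1)+k) = 0 then (2*π:ℂ) else 0) := by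
  simp_rw [term_eq r hr c m k]
  rw [integral_add, MeasureTheory.integral_const_mul, MeasureTheory.integral_const_mul, exp_int_integral, exp_int_integral]
  · apply Integrable.const_mul
    apply Continuous.integrableOn_Ioc
    fun_prop
  · apply Integrable.const_mul
    apply Continuous.integrableOn_Ioc
    fun_prop

lemma summable_aux {a : ℕ → ℂ} {r r' : ℝ} (hr : 0 < r) (hr1 : 1 < r') (hrr' : r < r')
    (hsum : Summable (fun m : ℕ => a (m+1) * (((r':ℂ))^(m+1) + (((r':ℂ))⁻¹)^(m+1)))) :
    Summable (fun m : ℕ => ‖a (m+1)‖ * r^(m+1)) := by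
  have hr'0 : (0:ℝ) < r' := lt_trans one_pos hr1
  obtain ⟨C, hC⟩ := (hsum.tendsto_atTop_zero.norm.bddAbove_range)
  have hbound : ∀ m : ℕ, ‖a (m+1)‖ * r^(m+1) ≤ C * (r / r')^(m+1) := by
    intro m
    have h1 : ‖a (m+1) * (((r':ℂ))^(m+1) + (((r':ℂ))⁻¹)^(m+1))‖ ≤ C :=
      hC (Set.mem_range_self m)
    have h2 : ‖(((r':ℂ))^(m+1) + (((r':ℂ))⁻¹)^(m+1))‖ = r'^(m+1) + (r'^(m+1))⁻¹ := by
      rw [show ((r':ℂ))^(m+1) + (((r':ℂ))⁻¹)^(m+1) = ((r'^(m+1) + (r'^(m+1))⁻¹ : ℝ) : ℂ) by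
        push_cast; ring]
      rw [Complex.norm_real, Real.norm_of_nonneg (by positivity)]
    have h3 : ‖a (m+1)‖ * r'^(m+1) ≤ C := by
      calc ‖a (m+1)‖ * r'^(m+1) ≤ ‖a (m+1)‖ * (r'^(m+1) + (r'^(m+1))⁻¹) := by
            have : (0:ℝ) < (r'^(m+1))⁻¹ := by positivity
            nlinarith [norm_nonneg (a (m+1))]
        _ = ‖a (m+1) * (((r':ℂ))^(m+1) + (((r':ℂ))⁻¹)^(m+1))‖ := by rw [norm_mul, h2]
        _ ≤ C := h1
    have h4 : ‖a (m+1)‖ * r^(m+1) = (‖a (m+1)‖ * r'^(m+1)) * (r/r')^(m+1) := by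
      rw [div_pow]
      field_simp
    rw [h4]
    have h5 : (0:ℝ) ≤ (r/r')^(m+1) := by positivity
    exact mul_le_mul_of_nonneg_right h3 h5
  apply Summable.of_nonneg_of_le (fun m => by positivity) hbound
  apply Summable.mul_left
  apply Summable.comp_injective (i := fun m : ℕ => m + 1)
  · exact summable_geometric_of_lt_one (by positivity) (by
      rw [div_lt_one hr'0]; exact hrr')
  · intro x y h
    simpa using h

lemma key_r (R : ℝ) (hR : 1 < R) (a : ℕ → ℂ) (f : ℂ → ℂ)
    (hf : ∀ w : ℂ, 1 < ‖w‖ → ‖w‖ < R →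
      HasSum (fun n : ℕ => a (n + 1) * (w ^ (n + 1) + (w⁻¹) ^ (n + 1))) (f w - a 0))
    (hre : ∀ w : ℂ, 1 < ‖w‖ → ‖w‖ < R → 0 < (f w).re)
    (n : ℕ) (hn : 1 ≤ n) (r : ℝ) (hr1 : 1 < r) (hrR : r < R) :
    ‖a n‖ * (r ^ n - (r ^ n)⁻¹) ≤ 2 * (a 0).re := by
  have hr0 : (0:ℝ) < r := lt_trans one_pos hr1
  set w : ℝ → ℂ := fun θ => (r:ℂ) * Complex.exp (θ * Complex.I) with hw
  have habs : ∀ θ : ℝ, ‖w θ‖ = r := by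
    intro θ
    simp [hw, Complex.norm_exp_ofReal_mul_I, abs_of_pos hr0]
  have hfθ : ∀ θ : ℝ, HasSum (fun m : ℕ => a (m+1) * ((w θ) ^ (m+1) + ((w θ)⁻¹) ^ (m+1)))
      (f (w θ) - a 0) := fun θ => hf (w θ) (by rw [habs]; exact hr1) (by rw [habs]; exact hrR)
  -- summability of coefficients against r
  set r' : ℝ := (r + R) / 2 with hr'
  have hrr' : r < r' := by rw [hr']; linarith
  have hr'1 : 1 < r' := lt_trans hr1 hrr'
  have hr'R : r' < R := by rw [hr']; linarith
  have hr'0 : (0:ℝ) < r' := lt_trans one_pos hr'1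
  have habs' : ‖((r':ℝ) : ℂ)‖ = r' := by
    rw [Complex.norm_real, Real.norm_eq_abs, abs_of_pos hr'0]
  have hA : Summable (fun m : ℕ => ‖a (m+1)‖ * r ^ (m+1)) := by
    apply summable_aux hr0 hr'1 hrr'
    exact (hf ((r':ℝ):ℂ) (by rw [habs']; exact hr'1) (by rw [habs']; exact hr'R)).summable
  -- the terms
  set F : ℤ → ℕ → ℝ → ℂ := fun k m θ =>
    a (m+1) * ((w θ) ^ (m+1) + ((w θ)⁻¹) ^ (m+1)) * Complex.exp (k * θ * Complex.I) with hF
  have hwcont : Continuous w := by fun_prop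
  have hw0 : ∀ θ, w θ ≠ 0 := by
    intro θ h
    have := habs θ
    rw [h] at this
    simp at this
    linarith
  have hFcont : ∀ (k : ℤ) (m : ℕ), Continuous (F k m) := by
    intro k m
    apply Continuous.mul
    · exact continuous_const.mul ((hwcont.pow _).add ((hwcont.inv₀ hw0).pow _))
    · fun_prop
  have hexpnorm : ∀ (k : ℤ) (θ : ℝ), ‖Complex.exp (k * θ * Complex.I)‖ = 1 := by
    intro k θ
    rw [show ((k:ℂ)) * θ * Complex.I = (((k * θ : ℝ)):ℂ) * Complex.I by push_cast; ring]
    exact Complex.norm_exp_ofReal_mul_I _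
  have hwnorm : ∀ (m : ℕ) (θ : ℝ), ‖(w θ) ^ (m+1) + ((w θ)⁻¹) ^ (m+1)‖ ≤ 2 * r ^ (m+1) := by
    intro m θ
    have h1 : ‖(w θ) ^ (m+1)‖ = r ^ (m+1) := by
      rw [norm_pow, habs]
    have h2 : ‖((w θ)⁻¹) ^ (m+1)‖ = (r ^ (m+1))⁻¹ := by
      rw [norm_pow, norm_inv, habs, inv_pow]
    calc ‖(w θ) ^ (m+1) + ((w θ)⁻¹) ^ (m+1)‖ ≤ ‖(w θ) ^ (m+1)‖ + ‖((w θ)⁻¹) ^ (m+1)‖ :=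
          norm_add_le _ _
      _ = r ^ (m+1) + (r ^ (m+1))⁻¹ := by rw [h1, h2]
      _ ≤ 2 * r ^ (m+1) := by
          have h3 : (1:ℝ) ≤ r ^ (m+1) := one_le_pow₀ hr1.le
          have h4 : (r ^ (m+1))⁻¹ ≤ 1 := inv_le_one_of_one_le₀ h3
          linarith
  have hFnorm : ∀ (k : ℤ) (m : ℕ) (θ : ℝ), ‖F k m θ‖ ≤ ‖a (m+1)‖ * (2 * r ^ (m+1)) := by
    intro k m θ
    rw [hF]
    simp only [norm_mul, hexpnorm, mul_one]
    exact mul_le_mul_of_nonneg_left (hwnorm m θ) (norm_nonneg _)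
  have hFint : ∀ (k : ℤ) (m : ℕ), IntegrableOn (F k m) (Set.Ioc (0:ℝ) (2*π)) :=
    fun k m => (hFcont k m).integrableOn_Ioc
  have hμ : (volume (Set.Ioc (0:ℝ) (2*π))).toReal = 2*π := by
    have : (0:ℝ) ≤ 2*π - 0 := by rw [sub_zero]; positivity
    rw [Real.volume_Ioc, ENNReal.toReal_ofReal this]
    ring
  have hSummInt : ∀ k : ℤ, Summable (fun m : ℕ => ∫ θ in Set.Ioc (0:ℝ) (2*π), ‖F k m θ‖) := by
    intro k
    apply Summable.of_nonneg_of_le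
      (fun m => integral_nonneg (fun θ => norm_nonneg _))
      (fun m => ?_)
      (hA.mul_left (2 * (2*π)))
    calc (∫ θ in Set.Ioc (0:ℝ) (2*π), ‖F k m θ‖)
        ≤ (‖a (m+1)‖ * (2 * r ^ (m+1))) * (volume (Set.Ioc (0:ℝ) (2*π))).toReal := by
          have := norm_setIntegral_le_of_norm_le_const (μ := volume)
            (s := Set.Ioc (0:ℝ) (2*π)) (f := fun θ => ‖F k m θ‖)
            (C := ‖a (m+1)‖ * (2 * r ^ (m+1)))
            (by rw [Real.volume_Ioc]; exact ENNReal.ofReal_lt_top)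
            (fun θ _ => by rw [Real.norm_of_nonneg (norm_nonneg _)]; exact hFnorm k m θ)
          calc (∫ θ in Set.Ioc (0:ℝ) (2*π), ‖F k m θ‖)
              ≤ ‖∫ θ in Set.Ioc (0:ℝ) (2*π), ‖F k m θ‖‖ := le_abs_self _
            _ ≤ _ := this
      _ = 2 * (2*π) * (‖a (m+1)‖ * r ^ (m+1)) := by rw [hμ]; ring
  have hkey : ∀ k : ℤ, HasSum (fun m : ℕ => ∫ θ in Set.Ioc (0:ℝ) (2*π), F k m θ)
      (∫ θ in Set.Ioc (0:ℝ) (2*π), (f (w θ) - a 0) * Complex.exp (k * θ * Complex.I)) := by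
    intro k
    have heq : ∀ θ : ℝ, (∑' m : ℕ, F k m θ) = (f (w θ) - a 0) * Complex.exp (k * θ * Complex.I) :=
      fun θ => ((hfθ θ).mul_right (Complex.exp (k * θ * Complex.I))).tsum_eq
    have h2 := MeasureTheory.hasSum_integral_of_summable_integral_norm
      (μ := volume.restrict (Set.Ioc (0:ℝ) (2*π))) (F := F k) (hFint k) (hSummInt k)
    rwa [MeasureTheory.integral_congr_ae (Filter.Eventually.of_forall heq)] at h2
  have hEval : ∀ (k : ℤ) (m : ℕ), (∫ θ in Set.Ioc (0:ℝ) (2*π), F k m θ)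
      = a (m+1) * (r:ℂ)^(m+1) * (if ((m:ℤ)+1+k) = 0 then (2*π:ℂ) else 0)
        + a (m+1) * ((r:ℂ)^(m+1))⁻¹ * (if (-((m:ℤ)+1)+k) = 0 then (2*π:ℂ) else 0) := by
    intro k m
    simpa [hF, hw] using term_integral r hr0 (a (m+1)) m k
  -- k = -n
  have hIneg : (∫ θ in Set.Ioc (0:ℝ) (2*π), (f (w θ) - a 0) *
        Complex.exp ((-(n:ℤ) : ℤ) * θ * Complex.I))
      = 2*π * (r:ℂ)^n * a n := by
    refine (hkey (-(n:ℤ))).unique ?_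
    have heq : (fun m : ℕ => ∫ θ in Set.Ioc (0:ℝ) (2*π), F (-(n:ℤ)) m θ)
        = fun m : ℕ => if m = n - 1 then (2*π : ℂ) * (r:ℂ)^n * a n else 0 := by
      funext m
      rw [hEval]
      by_cases hm : m = n - 1
      · subst hm
        have hc1 : (((n-1:ℕ):ℤ)+1+(-(n:ℤ))) = 0 := by omega
        have hc2 : ¬ (-(((n-1:ℕ):ℤ)+1)+(-(n:ℤ))) = 0 := by omega
        have hm1 : (n-1)+1 = n := by omega
        rw [if_pos hc1, if_neg hc2, hm1, if_pos rfl]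
        ring
      · have hc1 : ¬ (((m:ℕ):ℤ)+1+(-(n:ℤ))) = 0 := by omega
        have hc2 : ¬ (-(((m:ℕ):ℤ)+1)+(-(n:ℤ))) = 0 := by omega
        rw [if_neg hc1, if_neg hc2, if_neg hm]
        ring
    rw [heq]
    exact hasSum_ite_eq (n-1) _
  -- k = n
  have hIpos : (∫ θ in Set.Ioc (0:ℝ) (2*π), (f (w θ) - a 0) *
        Complex.exp (((n:ℤ) : ℤ) * θ * Complex.I))
      = 2*π * ((r:ℂ)^n)⁻¹ * a n := by
    refine (hkey ((n:ℤ))).unique ?_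
    have heq : (fun m : ℕ => ∫ θ in Set.Ioc (0:ℝ) (2*π), F ((n:ℤ)) m θ)
        = fun m : ℕ => if m = n - 1 then (2*π : ℂ) * ((r:ℂ)^n)⁻¹ * a n else 0 := by
      funext m
      rw [hEval]
      by_cases hm : m = n - 1
      · subst hm
        have hc1 : ¬ ((((n-1:ℕ)):ℤ)+1+(n:ℤ)) = 0 := by omega
        have hc2 : (-((((n-1:ℕ)):ℤ)+1)+(n:ℤ)) = 0 := by omega
        have hm1 : (n-1)+1 = n := by omega
        rw [if_neg hc1, if_pos hc2, hm1, if_pos rfl]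
        ring
      · have hc1 : ¬ (((m:ℕ):ℤ)+1+(n:ℤ)) = 0 := by omega
        have hc2 : ¬ (-(((m:ℕ):ℤ)+1)+(n:ℤ)) = 0 := by omega
        rw [if_neg hc1, if_neg hc2, if_neg hm]
        ring
    rw [heq]
    exact hasSum_ite_eq (n-1) _
  -- k = 0
  have hIzero : (∫ θ in Set.Ioc (0:ℝ) (2*π), (f (w θ) - a 0)) = 0 := by
    have hsum0 : HasSum (fun m : ℕ => ∫ θ in Set.Ioc (0:ℝ) (2*π), F 0 m θ) 0 := by
      have heq : (fun m : ℕ => ∫ θ in Set.Ioc (0:ℝ) (2*π), F 0 m θ) = fun _ : ℕ => (0:ℂ) := by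
        funext m
        rw [hEval]
        have hc1 : ¬ (((m:ℕ):ℤ)+1+(0:ℤ)) = 0 := by omega
        have hc2 : ¬ (-(((m:ℕ):ℤ)+1)+(0:ℤ)) = 0 := by omega
        rw [if_neg hc1, if_neg hc2]
        ring
      rw [heq]
      exact hasSum_zero
    have h0 := (hkey 0).unique hsum0
    rw [← h0]
    apply MeasureTheory.integral_congr_ae
    filter_upwards with θ
    simp
  -- continuity of f on the circle
  have hGcont : Continuous (fun θ => f (w θ)) := by
    have hterm : ∀ m : ℕ, Continuous (fun θ => a (m+1) * ((w θ) ^ (m+1) + ((w θ)⁻¹) ^ (m+1))) :=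
      fun m => continuous_const.mul ((hwcont.pow _).add ((hwcont.inv₀ hw0).pow _))
    have hu : Summable (fun m : ℕ => ‖a (m+1)‖ * (2 * r ^ (m+1))) :=
      (hA.mul_left 2).congr (fun m => by ring)
    have h1 : Continuous (fun θ => ∑' m : ℕ, a (m+1) * ((w θ) ^ (m+1) + ((w θ)⁻¹) ^ (m+1))) :=
      continuous_tsum hterm hu (fun m θ => by
        rw [norm_mul]
        exact mul_le_mul_of_nonneg_left (hwnorm m θ) (norm_nonneg _))
    have h2 : (fun θ => f (w θ))
        = fun θ => (∑' m : ℕ, a (m+1) * ((w θ) ^ (m+1) + ((w θ)⁻¹) ^ (m+1))) + a 0 := by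
      funext θ
      rw [(hfθ θ).tsum_eq]
      ring
    rw [h2]
    exact h1.add continuous_const
  have hfwint : IntegrableOn (fun θ => f (w θ)) (Set.Ioc (0:ℝ) (2*π)) :=
    hGcont.integrableOn_Ioc
  -- the mean value
  have hmean : (∫ θ in Set.Ioc (0:ℝ) (2*π), f (w θ)) = 2*π * a 0 := by
    have h1 := hIzero
    rw [MeasureTheory.integral_sub hfwint (MeasureTheory.integrableOn_const
      (by rw [Real.volume_Ioc]; exact ENNReal.ofReal_ne_top))] at h1
    rw [MeasureTheory.setIntegral_const, MeasureTheory.measureReal_def, hμ] at h1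
    have h2 : (∫ θ in Set.Ioc (0:ℝ) (2*π), f (w θ)) = (2*π : ℝ) • a 0 := by
      linear_combination (norm := module) h1
    rw [h2, real_smul]
    push_cast
    ring
  -- integrals of f against exponentials
  have hecont : ∀ k : ℤ, Continuous (fun θ : ℝ => Complex.exp ((k:ℂ) * θ * Complex.I)) := by
    intro k
    fun_prop
  have hfe : ∀ k : ℤ, k ≠ 0 →
      (∫ θ in Set.Ioc (0:ℝ) (2*π), f (w θ) * Complex.exp ((k:ℂ) * θ * Complex.I))
      = ∫ θ in Set.Ioc (0:ℝ) (2*π), (f (w θ) - a 0) * Complex.exp ((k:ℂ) * θ * Complex.I) := by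
    intro k hk
    have hsplit : (fun θ : ℝ => f (w θ) * Complex.exp ((k:ℂ) * θ * Complex.I))
        = fun θ : ℝ => (f (w θ) - a 0) * Complex.exp ((k:ℂ) * θ * Complex.I)
          + a 0 * Complex.exp ((k:ℂ) * θ * Complex.I) := by
      funext θ
      ring
    rw [hsplit, MeasureTheory.integral_add
      (f := fun θ : ℝ => (f (w θ) - a 0) * Complex.exp ((k:ℂ) * θ * Complex.I))
      (g := fun θ : ℝ => a 0 * Complex.exp ((k:ℂ) * θ * Complex.I))
      (((hGcont.sub continuous_const).mul (hecont k)).integrableOn_Ioc)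
      ((continuous_const.mul (hecont k)).integrableOn_Ioc),
      MeasureTheory.integral_const_mul, exp_int_integral, if_neg hk]
    ring
  -- the key Fourier coefficient of Re f
  have hconjint : (∫ θ in Set.Ioc (0:ℝ) (2*π),
        (starRingEnd ℂ) (f (w θ)) * Complex.exp (((-(n:ℤ) : ℤ) : ℂ) * θ * Complex.I))
      = 2*π * ((r:ℂ)^n)⁻¹ * (starRingEnd ℂ) (a n) := by
    have hpt : (fun θ : ℝ => (starRingEnd ℂ) (f (w θ)) * Complex.exp (((-(n:ℤ) : ℤ) : ℂ) * θ * Complex.I))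
        = fun θ : ℝ => (starRingEnd ℂ) (f (w θ) * Complex.exp ((((n:ℤ) : ℤ) : ℂ) * θ * Complex.I)) := by
      funext θ
      rw [map_mul, ← Complex.exp_conj]
      congr 2
      simp [Complex.conj_I]
    rw [hpt, integral_conj, hfe (n:ℤ) (by omega), hIpos]
    simp [map_mul, map_inv₀, Complex.conj_ofReal, map_ofNat]
  have hJ : (∫ θ in Set.Ioc (0:ℝ) (2*π),
        (((f (w θ)).re : ℂ)) * Complex.exp (((-(n:ℤ) : ℤ) : ℂ) * θ * Complex.I))
      = (π:ℂ) * ((r:ℂ)^n * a n + ((r:ℂ)^n)⁻¹ * (starRingEnd ℂ) (a n)) := by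
    have hsplit : (fun θ : ℝ => (((f (w θ)).re : ℂ)) * Complex.exp (((-(n:ℤ) : ℤ) : ℂ) * θ * Complex.I))
        = fun θ : ℝ => (1/2 : ℂ) * (f (w θ) * Complex.exp (((-(n:ℤ) : ℤ) : ℂ) * θ * Complex.I))
          + (1/2 : ℂ) * ((starRingEnd ℂ) (f (w θ)) * Complex.exp (((-(n:ℤ) : ℤ) : ℂ) * θ * Complex.I)) := by
      funext θ
      rw [show (((f (w θ)).re : ℂ)) = (f (w θ) + (starRingEnd ℂ) (f (w θ))) / 2 by
        rw [Complex.add_conj]; push_cast; ring]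
      ring
    have hconjcont : Continuous (fun θ : ℝ => (starRingEnd ℂ) (f (w θ))) :=
      continuous_star.comp hGcont
    rw [hsplit, MeasureTheory.integral_add
      (f := fun θ : ℝ => (1/2 : ℂ) * (f (w θ) * Complex.exp (((-(n:ℤ) : ℤ) : ℂ) * θ * Complex.I)))
      (g := fun θ : ℝ => (1/2 : ℂ) * ((starRingEnd ℂ) (f (w θ)) * Complex.exp (((-(n:ℤ) : ℤ) : ℂ) * θ * Complex.I)))
      ((continuous_const.mul (hGcont.mul (hecont (-(n:ℤ))))).integrableOn_Ioc)
      ((continuous_const.mul (hconjcont.mul (hecont (-(n:ℤ))))).integrableOn_Ioc),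
      MeasureTheory.integral_const_mul, MeasureTheory.integral_const_mul,
      hfe (-(n:ℤ)) (by omega),
      hIneg, hconjint]
    push_cast
    ring
  -- the bound
  have hre' : ∀ θ : ℝ, 0 < (f (w θ)).re :=
    fun θ => hre (w θ) (by rw [habs]; exact hr1) (by rw [habs]; exact hrR)
  have hJbound : ‖(π:ℂ) * ((r:ℂ)^n * a n + ((r:ℂ)^n)⁻¹ * (starRingEnd ℂ) (a n))‖
      ≤ 2*π*(a 0).re := by
    rw [← hJ]
    calc ‖∫ θ in Set.Ioc (0:ℝ) (2*π),
          (((f (w θ)).re : ℂ)) * Complex.exp (((-(n:ℤ) : ℤ) : ℂ) * θ * Complex.I)‖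
        ≤ ∫ θ in Set.Ioc (0:ℝ) (2*π),
          ‖(((f (w θ)).re : ℂ)) * Complex.exp (((-(n:ℤ) : ℤ) : ℂ) * θ * Complex.I)‖ :=
          MeasureTheory.norm_integral_le_integral_norm _
      _ = ∫ θ in Set.Ioc (0:ℝ) (2*π), (f (w θ)).re := by
          apply MeasureTheory.integral_congr_ae
          filter_upwards with θ
          rw [norm_mul, hexpnorm (-(n:ℤ)) θ, mul_one, Complex.norm_real,
            Real.norm_of_nonneg (hre' θ).le]
      _ = (∫ θ in Set.Ioc (0:ℝ) (2*π), f (w θ)).re := by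
          simpa using integral_re (𝕜 := ℂ) hfwint
      _ = 2*π*(a 0).re := by
          rw [hmean]
          rw [show (2*(π:ℂ)) = ((2*π : ℝ) : ℂ) by push_cast; ring, Complex.re_ofReal_mul]
  have hnorm2 : ‖(r:ℂ)^n * a n + ((r:ℂ)^n)⁻¹ * (starRingEnd ℂ) (a n)‖ ≤ 2*(a 0).re := by
    rw [norm_mul, Complex.norm_real, Real.norm_of_nonneg Real.pi_pos.le] at hJbound
    nlinarith [Real.pi_pos, norm_nonneg ((r:ℂ)^n * a n + ((r:ℂ)^n)⁻¹ * (starRingEnd ℂ) (a n))]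
  have htri : ‖(r:ℂ)^n * a n‖ - ‖((r:ℂ)^n)⁻¹ * (starRingEnd ℂ) (a n)‖
      ≤ ‖(r:ℂ)^n * a n + ((r:ℂ)^n)⁻¹ * (starRingEnd ℂ) (a n)‖ := by
    have h := norm_sub_norm_le ((r:ℂ)^n * a n) (-(((r:ℂ)^n)⁻¹ * (starRingEnd ℂ) (a n)))
    simpa [sub_neg_eq_add] using h
  have hn1 : ‖(r:ℂ)^n * a n‖ = r^n * ‖a n‖ := by
    rw [norm_mul, norm_pow, Complex.norm_real, Real.norm_of_nonneg hr0.le]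
  have hn2 : ‖((r:ℂ)^n)⁻¹ * (starRingEnd ℂ) (a n)‖ = (r^n)⁻¹ * ‖a n‖ := by
    rw [norm_mul, norm_inv, norm_pow, Complex.norm_real, Real.norm_of_nonneg hr0.le,
      RCLike.norm_conj]
  rw [hn1, hn2] at htri
  nlinarith [htri, hnorm2]

/-- Carathéodory-type inequality on the annulus {1 < |w| < R} for a symmetric Laurent
series `f(w) = a₀ + Σ_{n≥1} aₙ (wⁿ + w⁻ⁿ)` with positive real part. -/
theorem caratheodory_annulus (R : ℝ) (hR : 1 < R) (a : ℕ → ℂ) (f : ℂ → ℂ)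
    (hf : ∀ w : ℂ, 1 < ‖w‖ → ‖w‖ < R →
      HasSum (fun n : ℕ => a (n + 1) * (w ^ (n + 1) + (w⁻¹) ^ (n + 1))) (f w - a 0))
    (hre : ∀ w : ℂ, 1 < ‖w‖ → ‖w‖ < R → 0 < (f w).re) :
    ∀ n : ℕ, 1 ≤ n → ‖a n‖ ≤ 2 * (a 0).re / (R ^ n - (R ^ n)⁻¹) := by
  intro n hn
  have hRn : 1 < R ^ n := one_lt_pow₀ hR (by omega)
  have hpos : (0:ℝ) < R ^ n - (R ^ n)⁻¹ := by
    have h2 : (R ^ n)⁻¹ < 1 := inv_lt_one_of_one_lt₀ hRn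
    linarith
  rw [le_div_iff₀ hpos]
  have hcont : ContinuousAt (fun r : ℝ => ‖a n‖ * (r ^ n - (r ^ n)⁻¹)) R := by
    apply ContinuousAt.mul continuousAt_const
    exact ((continuous_pow n).continuousAt).sub
      (((continuous_pow n).continuousAt).inv₀ (by positivity))
  have hlim : Filter.Tendsto (fun r : ℝ => ‖a n‖ * (r ^ n - (r ^ n)⁻¹))
      (nhdsWithin R (Set.Iio R)) (nhds (‖a n‖ * (R ^ n - (R ^ n)⁻¹))) :=
    hcont.continuousWithinAt.tendsto
  apply le_of_tendsto hlim
  filter_upwards [Ioo_mem_nhdsLT_of_mem (Set.mem_Ioc.mpr ⟨hR, le_refl R⟩)] with r hr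
  exact key_r R hR a f hf hre n hn r hr.1 hr.2
end

section
/- Let 1 < R and let f be holomorphic on the annulus A = {1 < |w| < R} with Laurent expansion f(w) = a_0 + Σ_{n≥1} a_n (w^n + w^{-n}). If |f(w)| < 1 on A and a_0 is real with a_0 > 0, then for every n ≥ 1, |a_n| ≤ 2(1 − a_0)/(R^n − R^{-n}). -/
open Complex MeasureTheory intervalIntegral Real Filter Topology Set

lemma exp_orth (m : ℤ) :
    (∫ θ in (0:ℝ)..(2*Real.pi), Complex.exp ((m : ℂ) * Complex.I * θ)) =
      if m = 0 then (2*Real.pi : ℂ) else 0 := by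
  rcases eq_or_ne m 0 with h | h
  · simp [h]
  · rw [if_neg h]
    have hc : (m : ℂ) * Complex.I ≠ 0 :=
      mul_ne_zero (Int.cast_ne_zero.mpr h) Complex.I_ne_zero
    rw [integral_exp_mul_complex hc]
    have h2 : ((m:ℂ) * Complex.I * ((2*Real.pi : ℝ) : ℂ)) = (m : ℤ) * (2 * Real.pi * Complex.I) := by
      push_cast; ring
    rw [h2, Complex.exp_int_mul_two_pi_mul_I]
    simp

lemma cont_exp_aux (c : ℂ) : Continuous fun θ : ℝ => Complex.exp (c * θ) :=
  Complex.continuous_exp.comp (continuous_const.mul Complex.continuous_ofReal)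

lemma hEcont (m : ℤ) : Continuous fun θ : ℝ => Complex.exp ((m:ℂ) * Complex.I * θ) := by
  simpa [mul_assoc] using cont_exp_aux ((m:ℂ) * Complex.I)

lemma abs_E (m : ℤ) (θ : ℝ) : ‖Complex.exp ((m:ℂ) * Complex.I * θ)‖ = 1 := by
  have h : ((m:ℂ) * Complex.I * θ) = ((m * θ : ℝ) : ℂ) * Complex.I := by push_cast; ring
  rw [h, Complex.norm_exp_ofReal_mul_I]

lemma abs_E_neg (m : ℤ) (θ : ℝ) : ‖Complex.exp (-((m:ℤ):ℂ) * Complex.I * θ)‖ = 1 := by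
  have h := abs_E (-m) θ
  push_cast at h
  exact h

lemma hEcont_neg (m : ℤ) : Continuous fun θ : ℝ => Complex.exp (-((m:ℤ):ℂ) * Complex.I * θ) := by
  have h := hEcont (-m)
  push_cast at h
  exact h

lemma setint_exp (m : ℤ) :
    (∫ θ in Set.Ioc (0:ℝ) (2*Real.pi), Complex.exp ((m:ℂ) * Complex.I * θ)) =
      if m = 0 then (2*Real.pi : ℂ) else 0 := by
  rw [← intervalIntegral.integral_of_le (by positivity : (0:ℝ) ≤ 2*Real.pi)]
  exact exp_orth m

lemma term_int (r : ℝ) (A : ℂ) (j : ℕ) (m : ℤ) :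
    (∫ θ in (0:ℝ)..(2*Real.pi),
      A * ((r:ℂ)^j * Complex.exp (((j:ℤ):ℂ)*Complex.I*θ)
        + ((r:ℂ)⁻¹)^j * Complex.exp (((-(j:ℤ)):ℂ)*Complex.I*θ)) * Complex.exp ((m:ℂ)*Complex.I*θ))
    = A * ((r:ℂ)^j * (if (j:ℤ)+m = 0 then (2*Real.pi:ℂ) else 0)
        + ((r:ℂ)⁻¹)^j * (if -(j:ℤ)+m = 0 then (2*Real.pi:ℂ) else 0)) := by
  have hcong : ∀ θ : ℝ,
      A * ((r:ℂ)^j * Complex.exp (((j:ℤ):ℂ)*Complex.I*θ)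
        + ((r:ℂ)⁻¹)^j * Complex.exp (((-(j:ℤ)):ℂ)*Complex.I*θ)) * Complex.exp ((m:ℂ)*Complex.I*θ)
      = A * (r:ℂ)^j * Complex.exp ((((j:ℤ)+m : ℤ):ℂ)*Complex.I*θ)
        + A * ((r:ℂ)⁻¹)^j * Complex.exp (((-(j:ℤ)+m : ℤ):ℂ)*Complex.I*θ) := by
    intro θ
    have e1 : Complex.exp ((((j:ℤ)+m : ℤ):ℂ)*Complex.I*θ)
        = Complex.exp (((j:ℤ):ℂ)*Complex.I*θ) * Complex.exp ((m:ℂ)*Complex.I*θ) := by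
      rw [← Complex.exp_add]; congr 1; push_cast; ring
    have e2 : Complex.exp (((-(j:ℤ)+m : ℤ):ℂ)*Complex.I*θ)
        = Complex.exp (((-(j:ℤ)):ℂ)*Complex.I*θ) * Complex.exp ((m:ℂ)*Complex.I*θ) := by
      rw [← Complex.exp_add]; congr 1; push_cast; ring
    rw [e1, e2]; ring
  rw [intervalIntegral.integral_congr (fun θ _ => hcong θ)]
  have hi1 : IntervalIntegrable (fun θ : ℝ => A * (r:ℂ)^j
      * Complex.exp ((((j:ℤ)+m : ℤ):ℂ)*Complex.I*θ)) volume 0 (2*Real.pi) := by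
    apply Continuous.intervalIntegrable
    exact continuous_const.mul (by simpa [mul_assoc] using cont_exp_aux ((((j:ℤ)+m : ℤ):ℂ)*Complex.I))
  have hi2 : IntervalIntegrable (fun θ : ℝ => A * ((r:ℂ)⁻¹)^j
      * Complex.exp (((-(j:ℤ)+m : ℤ):ℂ)*Complex.I*θ)) volume 0 (2*Real.pi) := by
    apply Continuous.intervalIntegrable
    exact continuous_const.mul (by simpa [mul_assoc] using cont_exp_aux (((-(j:ℤ)+m : ℤ):ℂ)*Complex.I))
  rw [intervalIntegral.integral_add hi1 hi2, intervalIntegral.integral_const_mul,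
    intervalIntegral.integral_const_mul, exp_orth, exp_orth]
  ring

lemma circle_pow (r : ℝ) (θ : ℝ) (j : ℕ) :
    ((r:ℂ) * Complex.exp (θ * Complex.I))^j + (((r:ℂ) * Complex.exp (θ * Complex.I))⁻¹)^j
    = (r:ℂ)^j * Complex.exp (((j:ℤ):ℂ)*Complex.I*θ)
      + ((r:ℂ)⁻¹)^j * Complex.exp (((-(j:ℤ)):ℂ)*Complex.I*θ) := by
  rw [mul_inv, ← Complex.exp_neg, mul_pow, mul_pow, ← Complex.exp_nat_mul, ← Complex.exp_nat_mul]
  congr 2 <;> push_cast <;> ring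

lemma key_circle (R : ℝ) (a : ℕ → ℂ) (f : ℂ → ℂ)
    (hf : ∀ w : ℂ, 1 < ‖w‖ → ‖w‖ < R →
      HasSum (fun n : ℕ => a (n + 1) * (w ^ (n + 1) + (w⁻¹) ^ (n + 1))) (f w - a 0))
    (hb : ∀ w : ℂ, 1 < ‖w‖ → ‖w‖ < R → ‖f w‖ < 1)
    (n : ℕ) (hn : 1 ≤ n) (r : ℝ) (hr1 : 1 < r) (hrR : r < R) :
    ‖a n‖ * (r ^ n - (r ^ n)⁻¹) ≤ 2 * (1 - (a 0).re) := by
  have hr0 : 0 < r := lt_trans one_pos hr1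
  have hpi : (0:ℝ) < Real.pi := Real.pi_pos
  set w : ℝ → ℂ := fun θ => (r:ℂ) * Complex.exp ((θ:ℂ) * Complex.I) with hw
  have habs : ∀ θ : ℝ, ‖w θ‖ = r := by
    intro θ
    simp [hw, norm_mul, Complex.norm_exp_ofReal_mul_I, Complex.norm_real, Real.norm_eq_abs, abs_of_pos hr0]
  set g : ℕ → ℝ → ℂ := fun k θ =>
    a (k+1) * ((r:ℂ)^(k+1) * Complex.exp (((((k+1):ℕ):ℤ):ℂ)*Complex.I*θ)
      + ((r:ℂ)⁻¹)^(k+1) * Complex.exp (((-(((k+1):ℕ):ℤ)):ℂ)*Complex.I*θ)) with hg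
  have hS : ∀ θ : ℝ, HasSum (fun k => g k θ) (f (w θ) - a 0) := by
    intro θ
    have h1 : (fun k => g k θ) = fun k => a (k+1) * ((w θ) ^ (k+1) + ((w θ)⁻¹) ^ (k+1)) := by
      funext k
      rw [hg, hw]
      simp only []
      rw [circle_pow]
    rw [h1]
    exact hf (w θ) (by rw [habs]; exact hr1) (by rw [habs]; exact hrR)
  -- bound on coefficients from a larger circle
  set r' : ℝ := (r + R)/2 with hr'def
  have hrr' : r < r' := by rw [hr'def]; linarith
  have hr'R : r' < R := by rw [hr'def]; linarith
  have h1r' : 1 < r' := lt_trans hr1 hrr'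
  have hr'0 : 0 < r' := by linarith
  have habs' : ‖((r' : ℝ) : ℂ)‖ = r' := by
    rw [Complex.norm_real, Real.norm_eq_abs, abs_of_pos hr'0]
  have hsum0 := hf ((r':ℝ):ℂ) (by rw [habs']; exact h1r') (by rw [habs']; exact hr'R)
  have htend : Filter.Tendsto
      (fun k => ‖a (k+1) * ((((r':ℝ):ℂ)) ^ (k+1) + ((((r':ℝ):ℂ))⁻¹) ^ (k+1))‖)
      Filter.atTop (nhds 0) := by
    simpa using hsum0.summable.tendsto_atTop_zero.norm
  obtain ⟨M, hM⟩ := htend.bddAbove_range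
  have hM0 : 0 ≤ M := le_trans (norm_nonneg _) (hM (Set.mem_range_self 0))
  have hM' : ∀ k : ℕ, ‖a (k+1)‖ * (r' ^ (k+1)) ≤ M := by
    intro k
    have h2 : ‖a (k+1) * ((((r':ℝ):ℂ)) ^ (k+1) + ((((r':ℝ):ℂ))⁻¹) ^ (k+1))‖ ≤ M :=
      hM (Set.mem_range_self k)
    have h3 : ((((r':ℝ):ℂ)) ^ (k+1) + ((((r':ℝ):ℂ))⁻¹) ^ (k+1))
        = (((r'^(k+1) + (r'⁻¹)^(k+1) : ℝ)) : ℂ) := by push_cast; ring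
    rw [h3, norm_mul, Complex.norm_real] at h2
    have h4 : 0 < (r')⁻¹^(k+1) := pow_pos (inv_pos.mpr hr'0) (k+1)
    have h5 : |r'^(k+1) + (r'⁻¹)^(k+1)| = r'^(k+1) + (r'⁻¹)^(k+1) :=
      abs_of_pos (by positivity)
    rw [Real.norm_eq_abs, h5] at h2
    nlinarith [norm_nonneg (a (k+1))]
  -- geometric domination
  set ρ : ℝ := r / r' with hρdef
  have hρ0 : 0 ≤ ρ := le_of_lt (div_pos hr0 hr'0)
  have hρ1 : ρ < 1 := (div_lt_one hr'0).mpr hrr'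
  set c : ℕ → ℝ := fun k => 2*M*ρ^(k+1) with hc
  have hc_sum : Summable c := by
    refine ((summable_geometric_of_lt_one hρ0 hρ1).mul_left (2*M*ρ)).congr fun k => ?_
    rw [hc]; ring
  have hanr : ∀ k : ℕ, ‖a (k+1)‖ * r ^ (k+1) ≤ M * ρ^(k+1) := by
    intro k
    have hrw : r ^ (k+1) = r' ^ (k+1) * ρ ^ (k+1) := by
      rw [← mul_pow, hρdef]; congr 1; field_simp
    rw [hrw, ← mul_assoc]
    exact mul_le_mul_of_nonneg_right (hM' k) (pow_nonneg hρ0 _)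
  have hgb : ∀ (k : ℕ) (θ : ℝ), ‖g k θ‖ ≤ c k := by
    intro k θ
    rw [hg]
    simp only []
    rw [norm_mul]
    have h6 : ‖(r:ℂ)^(k+1) * Complex.exp (((((k+1):ℕ):ℤ):ℂ)*Complex.I*θ)
        + ((r:ℂ)⁻¹)^(k+1) * Complex.exp (((-(((k+1):ℕ):ℤ)):ℂ)*Complex.I*θ)‖
        ≤ r^(k+1) + (r⁻¹)^(k+1) := by
      refine le_trans (norm_add_le _ _) ?_
      rw [norm_mul, norm_mul, abs_E, abs_E_neg, mul_one, mul_one, norm_pow, norm_pow, norm_inv,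
        Complex.norm_real, Real.norm_eq_abs, abs_of_pos hr0]
    have h7 : (r⁻¹)^(k+1) ≤ 1 :=
      pow_le_one₀ (by positivity) (le_of_lt (inv_lt_one_of_one_lt₀ hr1))
    have h8 : (1:ℝ) ≤ r^(k+1) := one_le_pow₀ (le_of_lt hr1)
    have h9 := hanr k
    rw [hc]
    have h10 : 0 ≤ ‖a (k+1)‖ := norm_nonneg _
    calc ‖a (k+1)‖ * ‖_‖ ≤ ‖a (k+1)‖ * (r^(k+1) + (r⁻¹)^(k+1)) := by
          exact mul_le_mul_of_nonneg_left h6 h10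
      _ ≤ 2*M*ρ^(k+1) := by nlinarith
  -- continuity
  have hgc : ∀ k : ℕ, Continuous (g k) := by
    intro k
    rw [hg]
    exact continuous_const.mul
      (((continuous_const.mul (hEcont (((k+1):ℕ):ℤ))).add
        (continuous_const.mul (hEcont_neg (((k+1):ℕ):ℤ)))))
  have hfw_eq : (fun θ : ℝ => f (w θ)) = fun θ => a 0 + ∑' k, g k θ := by
    funext θ
    rw [(hS θ).tsum_eq]
    ring
  have hfwc : Continuous fun θ : ℝ => f (w θ) := by
    rw [hfw_eq]
    exact continuous_const.add (continuous_tsum hgc hc_sum fun k θ => hgb k θ)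
  -- the main termwise-integration statement
  have hmain : ∀ m : ℤ, HasSum
      (fun k : ℕ => a (k+1) * ((r:ℂ)^(k+1) * (if ((((k+1):ℕ):ℤ))+m = 0 then (2*Real.pi:ℂ) else 0)
        + ((r:ℂ)⁻¹)^(k+1) * (if -((((k+1):ℕ):ℤ))+m = 0 then (2*Real.pi:ℂ) else 0)))
      (∫ θ in Set.Ioc (0:ℝ) (2*Real.pi),
        (f (w θ) - a 0) * Complex.exp ((m:ℂ)*Complex.I*θ)) := by
    intro m
    have hint : ∀ k : ℕ, IntegrableOn
        (fun θ : ℝ => g k θ * Complex.exp ((m:ℂ)*Complex.I*θ)) (Set.Ioc 0 (2*Real.pi)) :=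
      fun k => ((hgc k).mul (hEcont m)).integrableOn_Ioc
    have hnb : ∀ (k : ℕ) (θ : ℝ), ‖g k θ * Complex.exp ((m:ℂ)*Complex.I*θ)‖ ≤ c k := by
      intro k θ
      rw [norm_mul, abs_E, mul_one]
      exact hgb k θ
    have hnorm : ∀ k : ℕ,
        (∫ θ in Set.Ioc (0:ℝ) (2*Real.pi), ‖g k θ * Complex.exp ((m:ℂ)*Complex.I*θ)‖)
          ≤ (2*Real.pi) * c k := by
      intro k
      have hle : (∫ θ in Set.Ioc (0:ℝ) (2*Real.pi), ‖g k θ * Complex.exp ((m:ℂ)*Complex.I*θ)‖)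
          ≤ ∫ _ in Set.Ioc (0:ℝ) (2*Real.pi), c k := by
        refine setIntegral_mono_on ((hint k).norm) ?_ measurableSet_Ioc fun θ _ => hnb k θ
        exact integrableOn_const measure_Ioc_lt_top.ne
      refine hle.trans ?_
      rw [setIntegral_const, Measure.real, Real.volume_Ioc, smul_eq_mul,
        ENNReal.toReal_ofReal (by linarith : (0:ℝ) ≤ 2*Real.pi - 0)]
      norm_num
    have hsum_int : Summable fun k : ℕ =>
        ∫ θ in Set.Ioc (0:ℝ) (2*Real.pi), ‖g k θ * Complex.exp ((m:ℂ)*Complex.I*θ)‖ := by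
      refine Summable.of_nonneg_of_le (fun k => integral_nonneg fun θ => norm_nonneg _)
        hnorm (hc_sum.mul_left (2*Real.pi))
    have H := MeasureTheory.hasSum_integral_of_summable_integral_norm hint hsum_int
    have heq : (∫ θ in Set.Ioc (0:ℝ) (2*Real.pi),
          ∑' k, g k θ * Complex.exp ((m:ℂ)*Complex.I*θ))
        = ∫ θ in Set.Ioc (0:ℝ) (2*Real.pi),
          (f (w θ) - a 0) * Complex.exp ((m:ℂ)*Complex.I*θ) := by
      refine setIntegral_congr_fun measurableSet_Ioc fun θ _ => ?_
      exact ((hS θ).mul_right _).tsum_eq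
    rw [heq] at H
    have hterm : (fun k : ℕ => ∫ θ in Set.Ioc (0:ℝ) (2*Real.pi),
          g k θ * Complex.exp ((m:ℂ)*Complex.I*θ))
        = fun k : ℕ => a (k+1) * ((r:ℂ)^(k+1) * (if ((((k+1):ℕ):ℤ))+m = 0 then (2*Real.pi:ℂ) else 0)
        + ((r:ℂ)⁻¹)^(k+1) * (if -((((k+1):ℕ):ℤ))+m = 0 then (2*Real.pi:ℂ) else 0)) := by
      funext k
      rw [← intervalIntegral.integral_of_le (by positivity : (0:ℝ) ≤ 2*Real.pi)]
      exact term_int r (a (k+1)) (k+1) m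
    rw [hterm] at H
    exact H
  -- basic integrabilities
  have hfint : IntegrableOn (fun θ : ℝ => f (w θ)) (Set.Ioc 0 (2*Real.pi)) :=
    hfwc.integrableOn_Ioc
  have hfEint : ∀ m : ℤ, IntegrableOn
      (fun θ : ℝ => f (w θ) * Complex.exp ((m:ℂ)*Complex.I*θ)) (Set.Ioc 0 (2*Real.pi)) :=
    fun m => (hfwc.mul (hEcont m)).integrableOn_Ioc
  have ha0Eint : ∀ m : ℤ, IntegrableOn
      (fun θ : ℝ => a 0 * Complex.exp ((m:ℂ)*Complex.I*θ)) (Set.Ioc 0 (2*Real.pi)) :=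
    fun m => (continuous_const.mul (hEcont m)).integrableOn_Ioc
  -- split (f - a0) * E
  have hsplit : ∀ m : ℤ,
      (∫ θ in Set.Ioc (0:ℝ) (2*Real.pi), (f (w θ) - a 0) * Complex.exp ((m:ℂ)*Complex.I*θ))
      = (∫ θ in Set.Ioc (0:ℝ) (2*Real.pi), f (w θ) * Complex.exp ((m:ℂ)*Complex.I*θ))
        - ∫ θ in Set.Ioc (0:ℝ) (2*Real.pi), a 0 * Complex.exp ((m:ℂ)*Complex.I*θ) := by
    intro m
    rw [← integral_sub (hfEint m) (ha0Eint m)]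
    exact setIntegral_congr_fun measurableSet_Ioc fun θ _ => by ring
  have ha0E : ∀ m : ℤ, m ≠ 0 →
      (∫ θ in Set.Ioc (0:ℝ) (2*Real.pi), a 0 * Complex.exp ((m:ℂ)*Complex.I*θ)) = 0 := by
    intro m hm
    rw [MeasureTheory.integral_const_mul, setint_exp, if_neg hm, mul_zero]
  -- m = 0 : mean value
  have hIf : (∫ θ in Set.Ioc (0:ℝ) (2*Real.pi), f (w θ)) = (2*Real.pi : ℝ) • a 0 := by
    have hm0 := hmain 0
    have hz : (fun k : ℕ => a (k+1) * ((r:ℂ)^(k+1) * (if ((((k+1):ℕ):ℤ))+(0:ℤ) = 0 then (2*Real.pi:ℂ) else 0)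
        + ((r:ℂ)⁻¹)^(k+1) * (if -((((k+1):ℕ):ℤ))+(0:ℤ) = 0 then (2*Real.pi:ℂ) else 0)))
        = fun _ : ℕ => (0:ℂ) := by
      funext k
      rw [if_neg (by omega), if_neg (by omega)]
      ring
    rw [hz] at hm0
    have h0 : (∫ θ in Set.Ioc (0:ℝ) (2*Real.pi),
        (f (w θ) - a 0) * Complex.exp (((0:ℤ):ℂ)*Complex.I*θ)) = 0 := hm0.unique hasSum_zero
    rw [hsplit 0] at h0
    have h1 : (∫ θ in Set.Ioc (0:ℝ) (2*Real.pi), a 0 * Complex.exp (((0:ℤ):ℂ)*Complex.I*θ))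
        = (2*Real.pi : ℝ) • a 0 := by
      rw [MeasureTheory.integral_const_mul, setint_exp, if_pos rfl]
      rw [Complex.real_smul]
      push_cast
      ring
    have h2 : (∫ θ in Set.Ioc (0:ℝ) (2*Real.pi), f (w θ) * Complex.exp (((0:ℤ):ℂ)*Complex.I*θ))
        = ∫ θ in Set.Ioc (0:ℝ) (2*Real.pi), f (w θ) := by
      refine setIntegral_congr_fun measurableSet_Ioc fun θ _ => ?_
      norm_num
    rw [h2, h1] at h0
    linear_combination h0
  -- m = -n
  have hIf2 : (∫ θ in Set.Ioc (0:ℝ) (2*Real.pi),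
      f (w θ) * Complex.exp (((-(n:ℤ) : ℤ):ℂ)*Complex.I*θ))
      = a n * ((r:ℂ)^n * (2*Real.pi:ℂ)) := by
    have hm2 := hmain (-(n:ℤ))
    have hz : (fun k : ℕ => a (k+1) * ((r:ℂ)^(k+1) * (if ((((k+1):ℕ):ℤ))+(-(n:ℤ)) = 0 then (2*Real.pi:ℂ) else 0)
        + ((r:ℂ)⁻¹)^(k+1) * (if -((((k+1):ℕ):ℤ))+(-(n:ℤ)) = 0 then (2*Real.pi:ℂ) else 0)))
        = fun k : ℕ => if k = n-1 then a n * ((r:ℂ)^n * (2*Real.pi:ℂ)) else 0 := by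
      funext k
      rcases eq_or_ne k (n-1) with hk | hk
      · subst hk
        rw [if_pos rfl, if_pos (by omega), if_neg (by omega)]
        have h3 : n - 1 + 1 = n := by omega
        rw [h3]
        ring
      · rw [if_neg hk, if_neg (by omega), if_neg (by omega)]
        ring
    rw [hz] at hm2
    have h0 := hm2.unique (hasSum_ite_eq (n-1) (a n * ((r:ℂ)^n * (2*Real.pi:ℂ))))
    rw [hsplit, ha0E _ (by omega)] at h0
    linear_combination h0
  -- m = n
  have hIf3 : (∫ θ in Set.Ioc (0:ℝ) (2*Real.pi),
      f (w θ) * Complex.exp (((n:ℤ):ℂ)*Complex.I*θ))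
      = a n * (((r:ℂ)⁻¹)^n * (2*Real.pi:ℂ)) := by
    have hm3 := hmain (n:ℤ)
    have hz : (fun k : ℕ => a (k+1) * ((r:ℂ)^(k+1) * (if ((((k+1):ℕ):ℤ))+((n:ℤ)) = 0 then (2*Real.pi:ℂ) else 0)
        + ((r:ℂ)⁻¹)^(k+1) * (if -((((k+1):ℕ):ℤ))+((n:ℤ)) = 0 then (2*Real.pi:ℂ) else 0)))
        = fun k : ℕ => if k = n-1 then a n * (((r:ℂ)⁻¹)^n * (2*Real.pi:ℂ)) else 0 := by
      funext k
      rcases eq_or_ne k (n-1) with hk | hk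
      · subst hk
        rw [if_pos rfl, if_neg (by omega), if_pos (by omega)]
        have h3 : n - 1 + 1 = n := by omega
        rw [h3]
        ring
      · rw [if_neg hk, if_neg (by omega), if_neg (by omega)]
        ring
    rw [hz] at hm3
    have h0 := hm3.unique (hasSum_ite_eq (n-1) (a n * (((r:ℂ)⁻¹)^n * (2*Real.pi:ℂ))))
    rw [hsplit, ha0E _ (by omega)] at h0
    linear_combination h0
  -- conjugate
  have hIconj : (∫ θ in Set.Ioc (0:ℝ) (2*Real.pi),
      (starRingEnd ℂ) (f (w θ)) * Complex.exp (((-(n:ℤ) : ℤ):ℂ)*Complex.I*θ))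
      = (starRingEnd ℂ) (a n) * (((r:ℂ)⁻¹)^n * (2*Real.pi:ℂ)) := by
    have h0 : (∫ θ in Set.Ioc (0:ℝ) (2*Real.pi),
        (starRingEnd ℂ) (f (w θ) * Complex.exp (((n:ℤ):ℂ)*Complex.I*θ)))
        = (starRingEnd ℂ) (a n * (((r:ℂ)⁻¹)^n * (2*Real.pi:ℂ))) := by
      rw [integral_conj, hIf3]
    have h1 : (fun θ : ℝ => (starRingEnd ℂ) (f (w θ) * Complex.exp (((n:ℤ):ℂ)*Complex.I*θ)))
        = fun θ : ℝ => (starRingEnd ℂ) (f (w θ))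
            * Complex.exp (((-(n:ℤ) : ℤ):ℂ)*Complex.I*θ) := by
      funext θ
      rw [map_mul, ← Complex.exp_conj]
      congr 1
      simp only [map_mul, Complex.conj_I, Complex.conj_ofReal, map_intCast]
      push_cast
      ring
    rw [h1] at h0
    rw [h0, map_mul]
    have h2 : (starRingEnd ℂ) (((r:ℂ))⁻¹ ^ n * (2*Real.pi:ℂ)) = ((r:ℂ))⁻¹ ^ n * (2*Real.pi:ℂ) := by
      have : (((r:ℂ))⁻¹ ^ n * (2*Real.pi:ℂ)) = ((((r⁻¹ ^ n) * (2*Real.pi) : ℝ)) : ℂ) := by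
        push_cast; ring
      rw [this, Complex.conj_ofReal]
    rw [h2]
  -- the positive density u = 1 - Re f
  have hu : ∀ θ : ℝ, 0 ≤ 1 - (f (w θ)).re := by
    intro θ
    have h1 := hb (w θ) (by rw [habs]; exact hr1) (by rw [habs]; exact hrR)
    have h2 := Complex.re_le_norm (f (w θ))
    linarith
  have hre : ∀ z : ℂ, ((1 - z.re : ℝ) : ℂ) = 1 - (z + (starRingEnd ℂ) z)/2 := by
    intro z
    rw [Complex.add_conj]
    push_cast
    ring
  -- value of B
  have hB : (∫ θ in Set.Ioc (0:ℝ) (2*Real.pi),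
        ((1 - (f (w θ)).re : ℝ) : ℂ) * Complex.exp (((-(n:ℤ) : ℤ):ℂ)*Complex.I*θ))
      = -(Real.pi:ℂ) * ((r:ℂ)^n * a n + ((r:ℂ)⁻¹)^n * (starRingEnd ℂ) (a n)) := by
    have hsplit2 : ∀ θ : ℝ, ((1 - (f (w θ)).re : ℝ) : ℂ)
          * Complex.exp (((-(n:ℤ) : ℤ):ℂ)*Complex.I*θ)
        = Complex.exp (((-(n:ℤ) : ℤ):ℂ)*Complex.I*θ)
          - (1/2:ℂ) * (f (w θ) * Complex.exp (((-(n:ℤ) : ℤ):ℂ)*Complex.I*θ))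
          - (1/2:ℂ) * ((starRingEnd ℂ) (f (w θ))
              * Complex.exp (((-(n:ℤ) : ℤ):ℂ)*Complex.I*θ)) := by
      intro θ
      rw [hre]
      ring
    have hconjc : Continuous fun θ : ℝ => (starRingEnd ℂ) (f (w θ)) :=
      Complex.continuous_conj.comp hfwc
    rw [setIntegral_congr_fun measurableSet_Ioc (fun θ _ => hsplit2 θ)]
    rw [integral_sub (f := fun θ : ℝ => Complex.exp (((-(n:ℤ) : ℤ):ℂ)*Complex.I*θ)
          - (1/2:ℂ) * (f (w θ) * Complex.exp (((-(n:ℤ) : ℤ):ℂ)*Complex.I*θ)))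
        (g := fun θ : ℝ => (1/2:ℂ) * ((starRingEnd ℂ) (f (w θ))
          * Complex.exp (((-(n:ℤ) : ℤ):ℂ)*Complex.I*θ))) (((hEcont _).sub
        (continuous_const.mul (hfwc.mul (hEcont _)))).integrableOn_Ioc)
      ((continuous_const.mul ((hconjc).mul
        (hEcont _))).integrableOn_Ioc),
      integral_sub (f := fun θ : ℝ => Complex.exp (((-(n:ℤ) : ℤ):ℂ)*Complex.I*θ))
        (g := fun θ : ℝ => (1/2:ℂ) * (f (w θ) * Complex.exp (((-(n:ℤ) : ℤ):ℂ)*Complex.I*θ)))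
        ((hEcont _).integrableOn_Ioc)
        ((continuous_const.mul (hfwc.mul (hEcont _))).integrableOn_Ioc),
      MeasureTheory.integral_const_mul, MeasureTheory.integral_const_mul,
      setint_exp, if_neg (by omega : ¬ -(n:ℤ) = 0), hIf2, hIconj]
    ring
  -- value of A
  have hA : (∫ θ in Set.Ioc (0:ℝ) (2*Real.pi), (1 - (f (w θ)).re))
      = 2*Real.pi*(1 - (a 0).re) := by
    have hreint : IntegrableOn (fun θ : ℝ => (f (w θ)).re) (Set.Ioc 0 (2*Real.pi)) :=
      (Complex.continuous_re.comp hfwc).integrableOn_Ioc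
    rw [integral_sub (integrableOn_const (C := (1:ℝ)) measure_Ioc_lt_top.ne) hreint]
    have h1 : (∫ θ in Set.Ioc (0:ℝ) (2*Real.pi), (f (w θ)).re)
        = (∫ θ in Set.Ioc (0:ℝ) (2*Real.pi), f (w θ)).re := by
      have h2 := integral_re (μ := volume.restrict (Set.Ioc (0:ℝ) (2*Real.pi)))
        (f := fun θ : ℝ => f (w θ)) hfint
      simpa using h2
    rw [h1, hIf]
    have h3 : (∫ _ in Set.Ioc (0:ℝ) (2*Real.pi), (1:ℝ)) = 2*Real.pi := by
      rw [setIntegral_const, Measure.real, Real.volume_Ioc, smul_eq_mul,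
        ENNReal.toReal_ofReal (by linarith : (0:ℝ) ≤ 2*Real.pi - 0)]
      ring
    rw [h3]
    have h4 : ((2*Real.pi : ℝ) • a 0).re = 2*Real.pi * (a 0).re := by
      simp [Complex.real_smul]
    rw [h4]
    ring
  -- the bound |B| ≤ A
  have hBnorm : ‖∫ θ in Set.Ioc (0:ℝ) (2*Real.pi),
        ((1 - (f (w θ)).re : ℝ) : ℂ) * Complex.exp (((-(n:ℤ) : ℤ):ℂ)*Complex.I*θ)‖
      ≤ ∫ θ in Set.Ioc (0:ℝ) (2*Real.pi), (1 - (f (w θ)).re) := by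
    refine le_trans ?_ (le_of_eq (setIntegral_congr_fun measurableSet_Ioc
      (fun θ _ => ?_) : (∫ θ in Set.Ioc (0:ℝ) (2*Real.pi),
        ‖((1 - (f (w θ)).re : ℝ) : ℂ) * Complex.exp (((-(n:ℤ) : ℤ):ℂ)*Complex.I*θ)‖)
        = _))
    · exact norm_integral_le_integral_norm _
    · rw [norm_mul, abs_E, mul_one,
        Complex.norm_real, Real.norm_eq_abs, _root_.abs_of_nonneg (hu θ)]
  rw [hB, hA] at hBnorm
  have habsB : ‖-(Real.pi:ℂ)
        * ((r:ℂ)^n * a n + ((r:ℂ)⁻¹)^n * (starRingEnd ℂ) (a n))‖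
      = Real.pi * ‖(r:ℂ)^n * a n + ((r:ℂ)⁻¹)^n * (starRingEnd ℂ) (a n)‖ := by
    rw [norm_mul, norm_neg, Complex.norm_real, Real.norm_eq_abs, abs_of_pos hpi]
  rw [habsB] at hBnorm
  -- lower bound on the norm
  have hxabs : ‖(r:ℂ)^n * a n‖ = r^n * ‖a n‖ := by
    rw [norm_mul, norm_pow, Complex.norm_real, Real.norm_eq_abs, abs_of_pos hr0]
  have hyabs : ‖((r:ℂ)⁻¹)^n * (starRingEnd ℂ) (a n)‖
      = (r^n)⁻¹ * ‖a n‖ := by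
    rw [norm_mul, norm_pow, norm_inv, Complex.norm_real, Real.norm_eq_abs, abs_of_pos hr0, Complex.norm_conj,
      inv_pow]
  have hlow : r^n * ‖a n‖ - (r^n)⁻¹ * ‖a n‖
      ≤ ‖(r:ℂ)^n * a n + ((r:ℂ)⁻¹)^n * (starRingEnd ℂ) (a n)‖ := by
    have h5 := norm_add_le
      ((r:ℂ)^n * a n + ((r:ℂ)⁻¹)^n * (starRingEnd ℂ) (a n))
      (-(((r:ℂ)⁻¹)^n * (starRingEnd ℂ) (a n)))
    rw [add_neg_cancel_right, norm_neg, hxabs, hyabs] at h5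
    linarith
  nlinarith [mul_le_mul_of_nonneg_left hlow (le_of_lt hpi)]

/-- If `f(w) = a₀ + Σ_{n≥1} aₙ (wⁿ + w⁻ⁿ)` is holomorphic on {1 < |w| < R}, |f| < 1 and
`a₀` is real with `a₀ > 0`, then `|aₙ| ≤ 2(1 - a₀)/(Rⁿ - R⁻ⁿ)` for all n ≥ 1. -/
theorem coeff_bound_annulus (R : ℝ) (hR : 1 < R) (a : ℕ → ℂ) (f : ℂ → ℂ)
    (hf : ∀ w : ℂ, 1 < ‖w‖ → ‖w‖ < R →
      HasSum (fun n : ℕ => a (n + 1) * (w ^ (n + 1) + (w⁻¹) ^ (n + 1))) (f w - a 0))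
    (hb : ∀ w : ℂ, 1 < ‖w‖ → ‖w‖ < R → ‖f w‖ < 1)
    (ha0_im : (a 0).im = 0) (ha0_pos : 0 < (a 0).re) :
    ∀ n : ℕ, 1 ≤ n → ‖a n‖ ≤ 2 * (1 - (a 0).re) / (R ^ n - (R ^ n)⁻¹) := by
  intro n hn
  have hRn1 : (1:ℝ) < R ^ n := one_lt_pow₀ hR (by omega)
  have hden : 0 < R ^ n - (R ^ n)⁻¹ := by
    have h1 : (R ^ n)⁻¹ < 1 := inv_lt_one_of_one_lt₀ hRn1
    linarith
  rw [le_div_iff₀ hden]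
  have key : ∀ r ∈ Set.Ioo (1:ℝ) R,
      ‖a n‖ * (r ^ n - (r ^ n)⁻¹) ≤ 2 * (1 - (a 0).re) :=
    fun r hr => key_circle R a f hf hb n hn r hr.1 hr.2
  have htend : Filter.Tendsto (fun r : ℝ => ‖a n‖ * (r ^ n - (r ^ n)⁻¹))
      (nhdsWithin R (Set.Iio R)) (nhds (‖a n‖ * (R ^ n - (R ^ n)⁻¹))) := by
    apply Filter.Tendsto.mono_left _ nhdsWithin_le_nhds
    have h1 : ContinuousAt (fun r : ℝ => r ^ n) R := (continuous_pow n).continuousAt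
    exact (continuousAt_const.mul (h1.sub (h1.inv₀ (pow_ne_zero n (by linarith)))))
  refine le_of_tendsto htend ?_
  filter_upwards [self_mem_nhdsWithin,
    mem_nhdsWithin_of_mem_nhds (Ioi_mem_nhds hR)] with r h1 h2
  exact key r ⟨h2, h1⟩
end
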